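/- arXiv:1811.07202 — 5 statements merged into one kernel-verified Lean document; each statement's English description precedes it below -/
import Mathlib

section
/- Let A and B be matrices in GL₂(ℤ) such that A and B are conjugate modulo m for every integer m ≥ 1 (i.e., the reductions of A and B in GL₂(ℤ/mℤ) are conjugate for every m ≥ 1). Then the groups G_A and G_B have the same finite quotients: every finite group is a surjective homomorphic image of G_A if and only if it is a surjective homomorphic image of G_B. -/
open Matrix Polynomial IntermediateField

/-- The additive automorphism of `Fin 2 → ℤ` given by an element of `GL₂(ℤ)`. -/
noncomputable def matAddAut (A : GL (Fin 2) ℤ) : (Fin 2 → ℤ) ≃+ (Fin 2 → ℤ) :=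
  (LinearMap.GeneralLinearGroup.generalLinearEquiv ℤ (Fin 2 → ℤ)
    (Matrix.GeneralLinearGroup.toLin A)).toAddEquiv

/-- The same automorphism, viewed multiplicatively. -/
noncomputable def matMulAut (A : GL (Fin 2) ℤ) :
    MulAut (Multiplicative (Fin 2 → ℤ)) :=
  AddEquiv.toMultiplicative (matAddAut A)

/-- The group `G_A = (ℤ × ℤ) ⋊_A ℤ`, where `ℤ` acts on `ℤ × ℤ` by `n ↦ Aⁿ`. -/
noncomputable abbrev Gmat (A : GL (Fin 2) ℤ) :=
  SemidirectProduct (Multiplicative (Fin 2 → ℤ)) (Multiplicative ℤ)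
    (zpowersHom (MulAut (Multiplicative (Fin 2 → ℤ))) (matMulAut A))

/-- `A` and `B` are conjugate modulo `m`: their reductions in `GL₂(ℤ/mℤ)` are conjugate. -/
def ConjMod (m : ℕ) (A B : GL (Fin 2) ℤ) : Prop :=
  IsConj (Units.map ((Int.castRingHom (ZMod m)).mapMatrix).toMonoidHom A)
         (Units.map ((Int.castRingHom (ZMod m)).mapMatrix).toMonoidHom B)

/-- Two groups have the same finite quotients: every finite group is a surjective image of
one iff it is a surjective image of the other. -/
def SameFiniteQuotients (G H : Type*) [Group G] [Group H] : Prop :=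
  ∀ (Q : Type) [Group Q] [Finite Q],
    (∃ f : G →* Q, Function.Surjective f) ↔ (∃ f : H →* Q, Function.Surjective f)

/-! ### Auxiliary lemmas -/

lemma matAddAut_apply (A : GL (Fin 2) ℤ) (v : Fin 2 → ℤ) :
    matAddAut A v = (A : Matrix (Fin 2) (Fin 2) ℤ) *ᵥ v := by
  simp [matAddAut, Matrix.GeneralLinearGroup.toLin]

lemma matMulAut_mul (A B : GL (Fin 2) ℤ) : matMulAut (A*B) = matMulAut A * matMulAut B := by
  ext v : 1
  show (matAddAut (A*B)) (Multiplicative.toAdd v) = (matAddAut A) ((matAddAut B) (Multiplicative.toAdd v))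
  simp only [matAddAut_apply, mulVec_mulVec, Units.val_mul]

/-- `matMulAut` as a monoid hom. -/
noncomputable def matHom : GL (Fin 2) ℤ →* MulAut (Multiplicative (Fin 2 → ℤ)) :=
  MonoidHom.mk' matMulAut matMulAut_mul

lemma matMulAut_zpow_apply (A : GL (Fin 2) ℤ) (n : ℤ) (v : Multiplicative (Fin 2 → ℤ)) :
    Multiplicative.toAdd ((matMulAut A ^ n) v)
      = ((A ^ n : GL (Fin 2) ℤ) : Matrix (Fin 2) (Fin 2) ℤ) *ᵥ v.toAdd := by
  have : matMulAut A ^ n = matMulAut (A ^ n) := by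
    rw [show matMulAut A = matHom A from rfl, ← map_zpow]; rfl
  rw [this]
  show matAddAut (A ^ n) v.toAdd = _
  rw [matAddAut_apply]

lemma oneSide (A B : GL (Fin 2) ℤ) (h : ∀ m : ℕ, 1 ≤ m → ConjMod m A B)
    (Q : Type) [Group Q] [Finite Q]
    (f : Gmat A →* Q) (hf : Function.Surjective f) :
    ∃ g : Gmat B →* Q, Function.Surjective g := by
  classical
  set m := Nat.card Q with hmdef
  have hm : 1 ≤ m := Nat.card_pos
  haveI : NeZero m := ⟨by omega⟩
  obtain ⟨c0, hc0⟩ := h m hm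
  set red : GL (Fin 2) ℤ →* GL (Fin 2) (ZMod m) :=
    Units.map ((Int.castRingHom (ZMod m)).mapMatrix).toMonoidHom with hred
  set c : GL (Fin 2) (ZMod m) := (↑c0 : GL (Fin 2) (ZMod m)) with hcdef
  have hc : SemiconjBy c (red A) (red B) := hc0
  -- matrices
  set Dm : Matrix (Fin 2) (Fin 2) (ZMod m) := ((c⁻¹ : GL (Fin 2) (ZMod m)) : Matrix (Fin 2) (Fin 2) (ZMod m))
    with hDm
  set Cm : Matrix (Fin 2) (Fin 2) (ZMod m) := ((c : GL (Fin 2) (ZMod m)) : Matrix (Fin 2) (Fin 2) (ZMod m)) with hCm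
  have hDC : Dm * Cm = 1 := by
    rw [hDm, hCm, ← Units.val_mul, inv_mul_cancel, Units.val_one]
  have hAc : ∀ n : ℤ, ((red A ^ n : GL (Fin 2) (ZMod m)) : Matrix _ _ _) * Dm
      = Dm * ((red B ^ n : GL (Fin 2) (ZMod m)) : Matrix _ _ _) := by
    intro n
    have hcn : SemiconjBy c (red A ^ n) (red B ^ n) := hc.zpow_right n
    have h5 : (red A ^ n) * c⁻¹ = c⁻¹ * (red B ^ n) := hcn.inv_symm_left.eq.symm
    calc ((red A ^ n : GL (Fin 2) (ZMod m)) : Matrix _ _ _) * Dm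
        = ((red A ^ n * c⁻¹ : GL (Fin 2) (ZMod m)) : Matrix _ _ _) := by
          rw [Units.val_mul, hDm]
      _ = ((c⁻¹ * red B ^ n : GL (Fin 2) (ZMod m)) : Matrix _ _ _) := by rw [h5]
      _ = Dm * _ := by rw [Units.val_mul, hDm]
  -- reduction maps
  set ρ : (Fin 2 → ℤ) → (Fin 2 → ZMod m) := fun v i => (v i : ZMod m) with hρ
  set L : (Fin 2 → ZMod m) → (Fin 2 → ℤ) := fun u i => ((u i).val : ℤ) with hL
  have hρL : ∀ u, ρ (L u) = u := by
    intro u; funext i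
    simp [hρ, hL, ZMod.natCast_val, ZMod.cast_id]
  have hρadd : ∀ v w, ρ (v + w) = ρ v + ρ w := by
    intro v w; funext i; simp [hρ]
  have hρzero : ρ 0 = 0 := by funext i; simp [hρ]
  have hρ_mulVec : ∀ (M : GL (Fin 2) ℤ) (n : ℤ) (v : Fin 2 → ℤ),
      ρ (((M ^ n : GL (Fin 2) ℤ) : Matrix (Fin 2) (Fin 2) ℤ) *ᵥ v)
        = ((red M ^ n : GL (Fin 2) (ZMod m)) : Matrix _ _ _) *ᵥ ρ v := by
    intro M n v
    rw [← map_zpow red M n]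
    funext i
    have h1 : ((red (M ^ n) : GL (Fin 2) (ZMod m)) : Matrix _ _ _)
        = ((M ^ n : GL (Fin 2) ℤ) : Matrix (Fin 2) (Fin 2) ℤ).map (Int.castRingHom (ZMod m)) := by
      rw [hred]; rfl
    rw [h1]
    exact RingHom.map_mulVec (Int.castRingHom (ZMod m)) _ v i
  -- the restriction of f to the normal subgroup
  set a : Multiplicative (Fin 2 → ℤ) →* Q := f.comp SemidirectProduct.inl with ha
  have akey : ∀ v w : Fin 2 → ℤ, ρ v = ρ w →
      a (Multiplicative.ofAdd v) = a (Multiplicative.ofAdd w) := by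
    intro v w hvw
    have hdvd : ∀ i, (m : ℤ) ∣ (w i - v i) := by
      intro i
      have h1 : ((v i : ZMod m)) = (w i : ZMod m) := congrFun hvw i
      have h2 : ((w i - v i : ℤ) : ZMod m) = 0 := by push_cast [h1]; ring
      exact (ZMod.intCast_zmod_eq_zero_iff_dvd _ _).mp h2
    set k : Fin 2 → ℤ := fun i => (w i - v i) / m with hk
    have hw : w = v + m • k := by
      funext i
      have h5 : (m : ℤ) * ((w i - v i) / m) = w i - v i := Int.mul_ediv_cancel' (hdvd i)
      have h6 : (m • k) i = (m : ℤ) * ((w i - v i) / m) := by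
        simp [hk, nsmul_eq_mul]
      show w i = v i + (m • k) i
      rw [h6, h5]; ring
    symm
    calc a (Multiplicative.ofAdd w)
        = a (Multiplicative.ofAdd v * Multiplicative.ofAdd (m • k)) := by
          rw [hw, ofAdd_add]
      _ = a (Multiplicative.ofAdd v) * (a (Multiplicative.ofAdd k)) ^ m := by
          rw [_root_.map_mul, ofAdd_nsmul, _root_.map_pow]
      _ = a (Multiplicative.ofAdd v) := by
          rw [hmdef, pow_card_eq_one', mul_one]
  have aL_add : ∀ x y : Fin 2 → ZMod m,
      a (Multiplicative.ofAdd (L (x + y)))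
        = a (Multiplicative.ofAdd (L x)) * a (Multiplicative.ofAdd (L y)) := by
    intro x y
    have h1 : ρ (L (x + y)) = ρ (L x + L y) := by
      rw [hρL, hρadd, hρL, hρL]
    rw [akey _ _ h1, ofAdd_add, _root_.map_mul]
  -- the two maps for the lift
  set φ₀ : (Fin 2 → ℤ) → Q := fun v => a (Multiplicative.ofAdd (L (Dm *ᵥ ρ v))) with hφ₀
  have hφ₀add : ∀ v w, φ₀ (v + w) = φ₀ v * φ₀ w := by
    intro v w
    rw [hφ₀]
    simp only
    rw [hρadd, mulVec_add, aL_add]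
  have hφ₀zero : φ₀ 0 = 1 := by
    rw [hφ₀]
    simp only [hρzero, mulVec_zero]
    have : ρ (L 0) = ρ 0 := by rw [hρL, hρzero]
    rw [akey _ _ this, ofAdd_zero, _root_.map_one]
  set φ₁ : Multiplicative (Fin 2 → ℤ) →* Q :=
    { toFun := fun v => φ₀ v.toAdd
      map_one' := hφ₀zero
      map_mul' := fun x y => hφ₀add x.toAdd y.toAdd } with hφ₁
  set φ₂ : Multiplicative ℤ →* Q := f.comp SemidirectProduct.inr with hφ₂
  -- conjugation relation in Gmat A
  have hconjA : ∀ (n : ℤ) (w : Fin 2 → ℤ),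
      φ₂ (Multiplicative.ofAdd n) * a (Multiplicative.ofAdd w)
          * (φ₂ (Multiplicative.ofAdd n))⁻¹
        = a (Multiplicative.ofAdd (((A ^ n : GL (Fin 2) ℤ) : Matrix (Fin 2) (Fin 2) ℤ) *ᵥ w)) := by
    intro n w
    have h1 : (SemidirectProduct.inl ((matMulAut A ^ n) (Multiplicative.ofAdd w)) : Gmat A)
        = SemidirectProduct.inr (Multiplicative.ofAdd n)
          * SemidirectProduct.inl (Multiplicative.ofAdd w)
          * (SemidirectProduct.inr (Multiplicative.ofAdd n))⁻¹ := by
      have := SemidirectProduct.inl_aut (φ := zpowersHom _ (matMulAut A))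
        (Multiplicative.ofAdd n) (Multiplicative.ofAdd w)
      simpa using this
    have h2 : (matMulAut A ^ n) (Multiplicative.ofAdd w)
        = Multiplicative.ofAdd (((A ^ n : GL (Fin 2) ℤ) : Matrix (Fin 2) (Fin 2) ℤ) *ᵥ w) := by
      have := matMulAut_zpow_apply A n (Multiplicative.ofAdd w)
      simpa using congrArg Multiplicative.ofAdd this
    rw [ha, hφ₂]
    simp only [MonoidHom.comp_apply]
    rw [← _root_.map_inv f, ← _root_.map_mul f, ← _root_.map_mul f, ← h1, h2]
  -- compatibility for the lift
  have compat : ∀ g : Multiplicative ℤ,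
      φ₁.comp ((zpowersHom (MulAut (Multiplicative (Fin 2 → ℤ))) (matMulAut B) g).toMonoidHom)
        = (MulAut.conj (φ₂ g)).toMonoidHom.comp φ₁ := by
    intro g
    refine MonoidHom.ext fun v => ?_
    set n : ℤ := Multiplicative.toAdd g with hn
    have hg : g = Multiplicative.ofAdd n := rfl
    simp only [MonoidHom.comp_apply, MulEquiv.coe_toMonoidHom, MulAut.conj_apply]
    have hzp : zpowersHom (MulAut (Multiplicative (Fin 2 → ℤ))) (matMulAut B) g
        = matMulAut B ^ n := rfl
    rw [hzp]
    -- LHS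
    have hLHS : φ₁ ((matMulAut B ^ n) v) = φ₀ (((B ^ n : GL (Fin 2) ℤ) : Matrix (Fin 2) (Fin 2) ℤ) *ᵥ v.toAdd) := by
      rw [hφ₁]
      simp only [MonoidHom.coe_mk, OneHom.coe_mk]
      rw [matMulAut_zpow_apply]
    rw [hLHS]
    -- RHS
    have hv : φ₁ v = a (Multiplicative.ofAdd (L (Dm *ᵥ ρ v.toAdd))) := rfl
    rw [hv, hg, hconjA n (L (Dm *ᵥ ρ v.toAdd))]
    -- reduce both sides via akey
    rw [hφ₀]
    simp only
    apply akey
    rw [hρL, hρ_mulVec, hρ_mulVec, hρL, mulVec_mulVec, mulVec_mulVec, hAc]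
  set g : Gmat B →* Q := SemidirectProduct.lift φ₁ φ₂ compat with hg
  refine ⟨g, ?_⟩
  intro q
  obtain ⟨y, rfl⟩ := hf q
  set v : Multiplicative (Fin 2 → ℤ) :=
    Multiplicative.ofAdd (L (Cm *ᵥ ρ (Multiplicative.toAdd y.left))) with hv
  have hφ₁v : φ₁ v = a y.left := by
    have h1 : φ₁ v = a (Multiplicative.ofAdd (L (Dm *ᵥ ρ (L (Cm *ᵥ ρ y.left.toAdd))))) := rfl
    rw [h1]
    have h2 : ρ (L (Dm *ᵥ ρ (L (Cm *ᵥ ρ y.left.toAdd)))) = ρ y.left.toAdd := by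
      rw [hρL, hρL, mulVec_mulVec, hDC, one_mulVec]
    have h3 := akey _ _ h2
    simpa using h3
  refine ⟨SemidirectProduct.inl v * SemidirectProduct.inr y.right, ?_⟩
  rw [_root_.map_mul, hg]
  rw [SemidirectProduct.lift_inl, SemidirectProduct.lift_inr, hφ₁v]
  rw [ha, hφ₂]
  simp only [MonoidHom.comp_apply]
  rw [← _root_.map_mul f, SemidirectProduct.inl_left_mul_inr_right]

theorem conjModAll_imp_sameFiniteQuotients (A B : GL (Fin 2) ℤ)
    (h : ∀ m : ℕ, 1 ≤ m → ConjMod m A B) :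
    SameFiniteQuotients (Gmat A) (Gmat B) := by
  intro Q _ _
  constructor
  · rintro ⟨f, hf⟩
    exact oneSide A B h Q f hf
  · rintro ⟨f, hf⟩
    exact oneSide B A (fun m hm => (h m hm).symm) Q f hf
end

section
/- Let n ≥ 1 and let A ∈ GLₙ(ℤ) be a matrix all of whose eigenvalues equal 1, i.e., whose characteristic polynomial is (X − 1)ⁿ. Then the group G_A = ℤⁿ ⋊_A ℤ, where ℤ acts on ℤⁿ via the homomorphism ℤ → Aut(ℤⁿ) sending n to the automorphism given by Aⁿ, is nilpotent. -/
open Matrix Polynomial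

/-- The additive automorphism of `Fin n → ℤ` given by an element of `GLₙ(ℤ)`. -/
noncomputable def matAddAutN (n : ℕ) (A : GL (Fin n) ℤ) : (Fin n → ℤ) ≃+ (Fin n → ℤ) :=
  (LinearMap.GeneralLinearGroup.generalLinearEquiv ℤ (Fin n → ℤ)
    (Matrix.GeneralLinearGroup.toLin A)).toAddEquiv

/-- The same automorphism, viewed multiplicatively. -/
noncomputable def matMulAutN (n : ℕ) (A : GL (Fin n) ℤ) :
    MulAut (Multiplicative (Fin n → ℤ)) :=
  AddEquiv.toMultiplicative (matAddAutN n A)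

/-- The group `G_A = ℤⁿ ⋊_A ℤ`, where `ℤ` acts on `ℤⁿ` by `k ↦ Aᵏ`. -/
noncomputable abbrev GmatN (n : ℕ) (A : GL (Fin n) ℤ) :=
  SemidirectProduct (Multiplicative (Fin n → ℤ)) (Multiplicative ℤ)
    (zpowersHom (MulAut (Multiplicative (Fin n → ℤ))) (matMulAutN n A))

lemma matMulAutN_apply (n : ℕ) (A : GL (Fin n) ℤ) (a : Multiplicative (Fin n → ℤ)) :
    Multiplicative.toAdd (matMulAutN n A a) = A.val *ᵥ Multiplicative.toAdd a := rfl

/-- `matMulAutN n` as a monoid hom. -/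
noncomputable def PhiN (n : ℕ) : GL (Fin n) ℤ →* MulAut (Multiplicative (Fin n → ℤ)) :=
  MonoidHom.mk' (matMulAutN n) (by
    intro A B
    ext a
    apply Multiplicative.toAdd.injective
    rw [MulAut.mul_apply, matMulAutN_apply, matMulAutN_apply, matMulAutN_apply,
      Units.val_mul, Matrix.mulVec_mulVec])

lemma matMulAutN_zpow_apply (n : ℕ) (A : GL (Fin n) ℤ) (k : ℤ)
    (a : Multiplicative (Fin n → ℤ)) :
    Multiplicative.toAdd ((matMulAutN n A ^ k) a) = ((A ^ k).val) *ᵥ Multiplicative.toAdd a := by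
  have : matMulAutN n A ^ k = matMulAutN n (A ^ k) := (map_zpow (PhiN n) A k).symm
  rw [this, matMulAutN_apply]

lemma glZpow_fixed (n : ℕ) (A : GL (Fin n) ℤ) (u : Fin n → ℤ)
    (hu : A.val *ᵥ u = u) (k : ℤ) : (A ^ k).val *ᵥ u = u := by
  have hinv : (A⁻¹).val *ᵥ u = u := by
    conv_lhs => rw [← hu]
    rw [Matrix.mulVec_mulVec, ← Units.val_mul, inv_mul_cancel, Units.val_one, Matrix.one_mulVec]
  induction k using Int.induction_on with
  | zero => simp [Matrix.one_mulVec]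
  | succ i ih => rw [_root_.zpow_add_one, Units.val_mul, ← Matrix.mulVec_mulVec, hu, ih]
  | pred i ih => rw [_root_.zpow_sub_one, Units.val_mul, ← Matrix.mulVec_mulVec, hinv, ih]

lemma glCommute (n : ℕ) (A : GL (Fin n) ℤ) (i : ℕ) (k : ℤ) :
    Commute ((A.val - 1) ^ i) ((A ^ k).val) := by
  have h1 : Commute A.val ((A ^ k).val) := ((Commute.refl A).zpow_right k).map (Units.coeHom _)
  exact (h1.sub_left (Commute.one_left _)).pow_left i

lemma commutator_right (n : ℕ) (A : GL (Fin n) ℤ) (x g : GmatN n A) :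
    (x * g * x⁻¹ * g⁻¹).right = 1 := by
  simp [SemidirectProduct.mul_right, SemidirectProduct.inv_right, mul_comm]

lemma commutator_left (n : ℕ) (A : GL (Fin n) ℤ) (x g : GmatN n A) (hx : x.right = 1) :
    Multiplicative.toAdd (x * g * x⁻¹ * g⁻¹).left
      = Multiplicative.toAdd x.left
        - (A ^ Multiplicative.toAdd g.right).val *ᵥ Multiplicative.toAdd x.left := by
  simp [SemidirectProduct.mul_left, SemidirectProduct.mul_right, SemidirectProduct.inv_left,
    SemidirectProduct.inv_right, hx, toAdd_mul, matMulAutN_zpow_apply]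
  abel

/-- The `i`-th stage of an ascending central series for `GmatN n A`. -/
noncomputable def KsubN (n : ℕ) (A : GL (Fin n) ℤ) (i : ℕ) : Subgroup (GmatN n A) where
  carrier := {g | g.right = 1 ∧ (A.val - 1) ^ i *ᵥ Multiplicative.toAdd g.left = 0}
  one_mem' := by
    refine ⟨rfl, ?_⟩
    simp
  mul_mem' := by
    rintro a b ⟨ha1, ha2⟩ ⟨hb1, hb2⟩
    refine ⟨?_, ?_⟩
    · rw [SemidirectProduct.mul_right, ha1, hb1, mul_one]
    · rw [SemidirectProduct.mul_left, ha1, toAdd_mul, Matrix.mulVec_add, ha2, _root_.map_one,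
        MulAut.one_apply, hb2, add_zero]
  inv_mem' := by
    rintro a ⟨ha1, ha2⟩
    refine ⟨by rw [SemidirectProduct.inv_right, ha1, inv_one], ?_⟩
    rw [SemidirectProduct.inv_left, ha1, inv_one, _root_.map_one, MulAut.one_apply, toAdd_inv,
      Matrix.mulVec_neg, ha2, neg_zero]

theorem nilpotent_of_all_eigenvalues_one (n : ℕ) (hn : 1 ≤ n) (A : GL (Fin n) ℤ)
    (hcp : Matrix.charpoly A.val = (X - 1) ^ n) :
    Group.IsNilpotent (GmatN n A) := by
  -- Cayley–Hamilton: (A - 1)^n = 0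
  have hCH : (A.val - 1) ^ n = 0 := by
    have := Matrix.aeval_self_charpoly A.val
    rw [hcp, map_pow, map_sub, aeval_X, _root_.map_one] at this
    exact this
  rw [nilpotent_iff_finite_ascending_central_series]
  refine ⟨n + 1, fun i => if i ≤ n then KsubN n A i else ⊤, ⟨?_, ?_⟩, ?_⟩
  all_goals dsimp only
  · -- H 0 = ⊥
    rw [if_pos (Nat.zero_le n)]
    ext g
    simp only [KsubN, Subgroup.mem_mk, Set.mem_setOf_eq, Subgroup.mem_bot, pow_zero,
      Matrix.one_mulVec]
    constructor
    · rintro ⟨h1, h2⟩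
      ext : 1
      · exact Multiplicative.toAdd.injective (by simpa using h2)
      · exact h1
    · rintro rfl
      exact ⟨rfl, by simp⟩
  · -- central series condition
    intro x i hx g
    by_cases hi : i + 1 ≤ n
    · rw [if_pos hi] at hx
      rw [if_pos (Nat.le_of_succ_le hi)]
      obtain ⟨hx1, hx2⟩ := hx
      refine ⟨commutator_right n A x g, ?_⟩
      rw [commutatorElement_def, commutator_left n A x g hx1, Matrix.mulVec_sub, Matrix.mulVec_mulVec,
        (glCommute n A i (Multiplicative.toAdd g.right)).eq, ← Matrix.mulVec_mulVec]
      have hfix : A.val *ᵥ ((A.val - 1) ^ i *ᵥ Multiplicative.toAdd x.left)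
          = (A.val - 1) ^ i *ᵥ Multiplicative.toAdd x.left := by
        have : (A.val - 1) *ᵥ ((A.val - 1) ^ i *ᵥ Multiplicative.toAdd x.left) = 0 := by
          rw [Matrix.mulVec_mulVec, ← pow_succ']
          exact hx2
        rw [Matrix.sub_mulVec, Matrix.one_mulVec, sub_eq_zero] at this
        exact this
      rw [glZpow_fixed n A _ hfix, sub_self]
    · by_cases hi' : i ≤ n
      · -- i = n
        rw [if_pos hi']
        have hin : i = n := le_antisymm hi' (by omega)
        refine ⟨commutator_right n A x g, ?_⟩
        rw [hin, hCH, Matrix.zero_mulVec]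
      · rw [if_neg hi']
        trivial
  · rw [if_neg (by omega)]
end

section
/- Let K be a quadratic number field (i.e., [K : ℚ] = 2), let u be a unit of the ring of integers 𝒪_K with u ≠ ±1, and let S = ℤ[u, u⁻¹] be the subring of 𝒪_K generated by u and u⁻¹. Let I and J be nonzero ideals of 𝒪_K, regarded as S-modules by restriction of scalars along the inclusion S ⊆ 𝒪_K. If I and J are isomorphic as S-modules, then I and J lie in the same ideal class, i.e., there exists a nonzero α ∈ K with I = α·J; equivalently, ideals in distinct classes of the ideal class group of K are not isomorphic as S-modules. -/
open NumberField nonZeroDivisors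

theorem ideals_isomorphic_as_S_modules_same_class (K : Type*) [Field K] [NumberField K]
    (hquad : Module.finrank ℚ K = 2)
    (u : (𝓞 K)ˣ) (hu1 : u ≠ 1) (hu2 : u ≠ -1)
    (I J : Ideal (𝓞 K)) (hI : I ≠ ⊥) (hJ : J ≠ ⊥)
    (hiso : ∃ e : I ≃+ J,
      ∀ s : 𝓞 K, s ∈ Subring.closure {((u : (𝓞 K)ˣ) : 𝓞 K), ((u⁻¹ : (𝓞 K)ˣ) : 𝓞 K)} →
        ∀ x : I, e (s • x) = s • e x) :
    ∃ α : K, α ≠ 0 ∧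
      (I : FractionalIdeal (𝓞 K)⁰ K) =
        FractionalIdeal.spanSingleton (𝓞 K)⁰ α * (J : FractionalIdeal (𝓞 K)⁰ K) := by
  obtain ⟨e, he⟩ := hiso
  set S : Subring (𝓞 K) :=
    Subring.closure {((u : (𝓞 K)ˣ) : 𝓞 K), ((u⁻¹ : (𝓞 K)ˣ) : 𝓞 K)} with hS
  have hinj : Function.Injective (algebraMap (𝓞 K) K) :=
    NumberField.RingOfIntegers.coe_injective
  haveI : IsScalarTower ℤ ℚ K := by
    refine IsScalarTower.of_algebraMap_eq fun x => ?_
    simp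
  set v : K := algebraMap (𝓞 K) K ((u : (𝓞 K)ˣ) : 𝓞 K) with hv
  -- v is not rational
  have hv_not : ∀ q : ℚ, q • (1 : K) ≠ v := by
    intro q hq
    have hq' : algebraMap ℚ K q = v := by
      rw [← hq, Algebra.smul_def, mul_one]
    have hvint : IsIntegral ℤ v := (RingOfIntegers.isIntegral_coe _)
    have hqint : IsIntegral ℤ q := by
      rw [← isIntegral_algebraMap_iff (algebraMap ℚ K).injective, hq']
      exact hvint
    obtain ⟨m, hm⟩ := IsIntegrallyClosed.isIntegral_iff.mp hqint
    -- similarly for u⁻¹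
    set w : K := algebraMap (𝓞 K) K ((u⁻¹ : (𝓞 K)ˣ) : 𝓞 K) with hw
    have hvw : v * w = 1 := by
      rw [hv, hw, ← map_mul]
      simp
    have hwint : IsIntegral ℤ w := (RingOfIntegers.isIntegral_coe _)
    have hw' : w = algebraMap ℚ K (q⁻¹) := by
      have h1 : w = v⁻¹ := eq_inv_of_mul_eq_one_right hvw
      rw [h1, ← hq', ← map_inv₀]
    have hqne0 : q ≠ 0 := by
      intro h
      rw [h, map_zero] at hq'
      rw [← hq', zero_mul] at hvw
      exact zero_ne_one hvw
    have hqiint : IsIntegral ℤ (q⁻¹) := by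
      rw [← isIntegral_algebraMap_iff (algebraMap ℚ K).injective, ← hw']
      exact hwint
    obtain ⟨m', hm'⟩ := IsIntegrallyClosed.isIntegral_iff.mp hqiint
    have hmm' : m * m' = 1 := by
      have h2 : ((m * m' : ℤ) : ℚ) = 1 := by
        push_cast
        rw [← eq_intCast (algebraMap ℤ ℚ) m, ← eq_intCast (algebraMap ℤ ℚ) m', hm, hm',
          mul_inv_cancel₀ hqne0]
      exact_mod_cast h2
    have hunit : ((u : (𝓞 K)ˣ) : 𝓞 K) = (m : 𝓞 K) := by
      apply hinj
      rw [← hv, ← hq', ← hm]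
      simp
    rcases Int.eq_one_or_neg_one_of_mul_eq_one' hmm' with ⟨h1, _⟩ | ⟨h1, _⟩
    · apply hu1
      ext
      rw [hunit, h1]
      simp
    · apply hu2
      ext
      rw [hunit, h1]
      simp
  -- {v, 1} is a ℚ-basis of K
  have hli : LinearIndependent ℚ ![v, (1:K)] := by
    rw [linearIndependent_fin2]
    refine ⟨by simp, fun a ha => hv_not a (by simpa using ha)⟩
  let b : Module.Basis (Fin 2) ℚ K :=
    basisOfLinearIndependentOfCardEqFinrank hli (by simp [hquad])
  have hbc : ⇑b = ![v, (1:K)] := coe_basisOfLinearIndependentOfCardEqFinrank hli _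
  have hb0 : b 0 = v := by rw [hbc]; rfl
  have hb1 : b 1 = 1 := by rw [hbc]; rfl
  -- key: every element of 𝓞 K has a multiple in S
  have key : ∀ c : 𝓞 K, ∃ n : ℕ, (n : 𝓞 K) ≠ 0 ∧ (n : 𝓞 K) * c ∈ S := by
    intro c
    set cK : K := algebraMap (𝓞 K) K c with hcK
    have hrep : cK = b.repr cK 0 • v + b.repr cK 1 • 1 := by
      have h := b.sum_repr cK
      rw [Fin.sum_univ_two, hb0, hb1] at h
      exact h.symm
    set a0 : ℚ := b.repr cK 0 with ha0d
    set a1 : ℚ := b.repr cK 1 with ha1d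
    set n : ℕ := a0.den * a1.den with hn
    set z0 : ℤ := a0.num * (a1.den : ℤ) with hz0
    set z1 : ℤ := (a0.den : ℤ) * a1.num with hz1
    have hnne : (n : ℚ) ≠ 0 := by
      have : n ≠ 0 := Nat.mul_ne_zero a0.den_nz a1.den_nz
      exact_mod_cast this
    have hden0 : (a0.den : ℚ) ≠ 0 := by exact_mod_cast a0.den_nz
    have hden1 : (a1.den : ℚ) ≠ 0 := by exact_mod_cast a1.den_nz
    have hd0 : (a0.den : ℚ) * a0 = (a0.num : ℚ) := by
      rw [mul_comm]
      exact ((div_eq_iff hden0).mp (Rat.num_div_den a0)).symm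
    have hd1 : (a1.den : ℚ) * a1 = (a1.num : ℚ) := by
      rw [mul_comm]
      exact ((div_eq_iff hden1).mp (Rat.num_div_den a1)).symm
    have e0 : (n : ℚ) * a0 = (z0 : ℚ) := by
      rw [hn, hz0]
      push_cast
      linear_combination (a1.den : ℚ) * hd0
    have e1 : (n : ℚ) * a1 = (z1 : ℚ) := by
      rw [hn, hz1]
      push_cast
      linear_combination (a0.den : ℚ) * hd1
    have hnOK : (n : 𝓞 K) ≠ 0 := by
      intro h
      apply hnne
      have := congrArg (algebraMap (𝓞 K) K) h
      rw [map_natCast, map_zero] at this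
      exact_mod_cast this
    refine ⟨n, hnOK, ?_⟩
    have himg : algebraMap (𝓞 K) K ((n : 𝓞 K) * c)
        = algebraMap (𝓞 K) K ((z0 : 𝓞 K) * ((u : (𝓞 K)ˣ) : 𝓞 K) + (z1 : 𝓞 K)) := by
      rw [map_mul, map_add, map_mul, map_natCast, map_intCast, map_intCast, ← hcK, ← hv, hrep]
      have ha0 : (n : K) * algebraMap ℚ K a0 = (z0 : K) := by
        have := congrArg (algebraMap ℚ K) e0
        rw [map_mul, map_natCast, map_intCast] at this
        exact this
      have ha1 : (n : K) * algebraMap ℚ K a1 = (z1 : K) := by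
        have := congrArg (algebraMap ℚ K) e1
        rw [map_mul, map_natCast, map_intCast] at this
        exact this
      rw [Algebra.smul_def, Algebra.smul_def, mul_one, mul_add, ← mul_assoc, ha0, ha1]
    have heq : (n : 𝓞 K) * c = (z0 : 𝓞 K) * ((u : (𝓞 K)ˣ) : 𝓞 K) + (z1 : 𝓞 K) := hinj himg
    rw [heq]
    refine S.add_mem (S.mul_mem (intCast_mem S z0) ?_) (intCast_mem S z1)
    exact Subring.subset_closure (Set.mem_insert _ _)
  -- e is 𝓞 K-linear
  have hlin : ∀ (c : 𝓞 K) (x : I), e (c • x) = c • e x := by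
    intro c x
    obtain ⟨n, hn, hmem⟩ := key c
    have h1 := he _ hmem x
    rw [mul_smul, mul_smul] at h1
    rw [Nat.cast_smul_eq_nsmul, Nat.cast_smul_eq_nsmul] at h1
    rw [show e (n • (c • x)) = n • e (c • x) from map_nsmul e.toAddMonoidHom _ _] at h1
    have h3 : (n : 𝓞 K) * ((e (c • x) : J) : 𝓞 K) = (n : 𝓞 K) * ((c • e x : J) : 𝓞 K) := by
      have h2 := congrArg (Subtype.val) h1
      simpa [nsmul_eq_mul] using h2
    exact Subtype.ext (mul_left_cancel₀ hn h3)
  -- pick a nonzero element of I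
  obtain ⟨x0, hx0I, hx0⟩ := (Submodule.ne_bot_iff I).mp hI
  set X : I := ⟨x0, hx0I⟩ with hX
  set y0 : 𝓞 K := ((e X : J) : 𝓞 K) with hy0
  have hy0J : y0 ∈ J := (e X).2
  have hy0ne : y0 ≠ 0 := by
    intro h
    apply hx0
    have hX0 : X = 0 := by
      apply e.injective
      rw [map_zero]
      exact Subtype.ext h
    exact congrArg Subtype.val hX0
  have hid : ∀ z : I, x0 * ((e z : J) : 𝓞 K) = (z : 𝓞 K) * y0 := by
    intro z
    have h1 := hlin ((z : 𝓞 K)) X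
    have h2 := hlin x0 z
    have h3 : (z : 𝓞 K) • X = x0 • z := Subtype.ext (by simp [hX, smul_eq_mul, mul_comm])
    rw [h3, h2] at h1
    have := congrArg Subtype.val h1
    simpa [smul_eq_mul] using this
  set x0K : K := algebraMap (𝓞 K) K x0 with hx0K
  set y0K : K := algebraMap (𝓞 K) K y0 with hy0K
  have hx0Kne : x0K ≠ 0 := fun h => hx0 (hinj (by rw [← hx0K, h, map_zero]))
  have hy0Kne : y0K ≠ 0 := fun h => hy0ne (hinj (by rw [← hy0K, h, map_zero]))
  refine ⟨x0K / y0K, div_ne_zero hx0Kne hy0Kne, ?_⟩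
  rw [FractionalIdeal.eq_spanSingleton_mul]
  constructor
  · intro zI hzI
    rw [FractionalIdeal.mem_coeIdeal] at hzI
    obtain ⟨z, hz, rfl⟩ := hzI
    refine ⟨algebraMap (𝓞 K) K ((e ⟨z, hz⟩ : J) : 𝓞 K),
      FractionalIdeal.mem_coeIdeal_of_mem _ (e ⟨z, hz⟩).2, ?_⟩
    have h := congrArg (algebraMap (𝓞 K) K) (hid ⟨z, hz⟩)
    rw [map_mul, map_mul] at h
    rw [div_mul_eq_mul_div, div_eq_iff hy0Kne, hx0K, hy0K]
    simpa using h
  · intro z hz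
    rw [FractionalIdeal.mem_coeIdeal] at hz
    obtain ⟨zJ, hzJ, rfl⟩ := hz
    set w : I := e.symm ⟨zJ, hzJ⟩ with hw
    have h := hid w
    rw [hw, AddEquiv.apply_symm_apply] at h
    have h' := congrArg (algebraMap (𝓞 K) K) h
    rw [map_mul, map_mul] at h'
    have : x0K / y0K * algebraMap (𝓞 K) K zJ = algebraMap (𝓞 K) K ((w : 𝓞 K)) := by
      rw [div_mul_eq_mul_div, div_eq_iff hy0Kne, hx0K, hy0K]
      simpa [hw] using h' 
    rw [this]
    exact FractionalIdeal.mem_coeIdeal_of_mem _ w.2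
end

section
/- Let K be a number field, let I be a nonzero ideal of the ring of integers 𝒪_K, and let m be a positive integer. Then the quotient modules I/mI and 𝒪_K/m𝒪_K are isomorphic as 𝒪_K-modules. -/
open NumberField
open UniqueFactorizationMonoid
set_option maxHeartbeats 1000000

set_option synthInstance.maxHeartbeats 1000000 in
theorem quotient_ideal_mod_m_iso (K : Type*) [Field K] [NumberField K]
    (I : Ideal (𝓞 K)) (hI : I ≠ ⊥) (m : ℕ) (hm : 0 < m) :
    Nonempty
      ((I ⧸ (Ideal.span {(m : 𝓞 K)} • (⊤ : Submodule (𝓞 K) I))) ≃ₗ[𝓞 K]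
        ((𝓞 K) ⧸ Ideal.span {(m : 𝓞 K)})) := by
  classical
  set R := 𝓞 K
  set M : Ideal R := Ideal.span {(m : R)} with hMdef
  by_cases hMtop : M = ⊤
  · have h1 : (M • (⊤ : Submodule R I)) = ⊤ := by
      rw [hMtop]; exact Submodule.top_smul ⊤
    have : Subsingleton (I ⧸ (M • (⊤ : Submodule R I))) :=
      Submodule.Quotient.subsingleton_iff.mpr h1
    have : Subsingleton (R ⧸ M) :=
      Submodule.Quotient.subsingleton_iff.mpr hMtop
    exact ⟨LinearEquiv.ofSubsingleton _ _⟩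
  -- main case
  have hm0 : (m : R) ≠ 0 := Nat.cast_ne_zero.mpr hm.ne'
  have hM0 : M ≠ ⊥ := by
    simpa [hMdef, Ideal.span_singleton_eq_bot] using hm0
  have hI0 : I ≠ (0 : Ideal R) := hI
  set N : Ideal R := M * I with hNdef
  have hN0 : N ≠ 0 := mul_ne_zero hM0 hI0
  set s : Finset (Ideal R) := (normalizedFactors N).toFinset with hsdef
  set e : Ideal R → ℕ := fun P => (normalizedFactors I).count P with hedef
  have hsprime : ∀ P ∈ s, Prime P := fun P hP =>
    prime_of_normalized_factor P (Multiset.mem_toFinset.mp hP)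
  have hsbot : ∀ P ∈ s, P ≠ ⊥ := fun P hP =>
    ne_zero_of_dvd_ne_zero hN0 (dvd_of_mem_normalizedFactors (Multiset.mem_toFinset.mp hP))
  -- choose elements with exact valuation
  have hex : ∀ P ∈ s, ∃ x ∈ P ^ (e P), x ∉ P ^ (e P + 1) := by
    intro P hP
    haveI : P.IsPrime := Ideal.isPrime_of_prime (hsprime P hP)
    exact SetLike.exists_of_lt (Ideal.pow_succ_lt_pow (hsbot P hP) (e P))
  choose! a ha hna using hex
  -- CRT
  obtain ⟨y, hy⟩ := IsDedekindDomain.exists_forall_sub_mem_ideal (s := s)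
    (id : Ideal R → Ideal R) (fun P => e P + 1) (fun P hP => hsprime P hP)
    (fun P _ Q _ h => h) (fun P => a P.1)
  have hymem : ∀ P ∈ s, y ∈ P ^ (e P) := by
    intro P hP
    have h1 := hy P hP
    have : y = (y - a P) + a P := by ring
    rw [this]
    exact add_mem (Ideal.pow_le_pow_right (Nat.le_succ _) h1) (ha P hP)
  have hynmem : ∀ P ∈ s, y ∉ P ^ (e P + 1) := by
    intro P hP hmem
    exact hna P hP (by simpa using sub_mem hmem (hy P hP))
  -- s is nonempty, hence y ≠ 0
  have hNtop : ¬ IsUnit N := by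
    rw [Ideal.isUnit_iff]
    intro h
    exact hMtop (top_le_iff.mp (h ▸ Ideal.mul_le_left))
  obtain ⟨P₀, hP₀⟩ : ∃ P, P ∈ s := by
    obtain ⟨Q, hQirr, hQdvd⟩ := WfDvdMonoid.exists_irreducible_factor hNtop hN0
    exact ⟨Q, Multiset.mem_toFinset.mpr ((mem_normalizedFactors_iff hN0).mpr
      ⟨(irreducible_iff_prime).mp hQirr, hQdvd⟩)⟩
  have hy0 : y ≠ 0 := fun h => hynmem P₀ hP₀ (by simp [h])
  set Y : Ideal R := Ideal.span {y} with hYdef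
  have hY0 : Y ≠ 0 := by simpa [hYdef, Ideal.span_singleton_eq_bot] using hy0
  have hYcount : ∀ P ∈ s, (normalizedFactors Y).count P = e P := by
    intro P hP
    haveI : P.IsPrime := Ideal.isPrime_of_prime (hsprime P hP)
    refine Ideal.count_normalizedFactors_eq ?_ ?_
    · exact (Ideal.span_singleton_le_iff_mem _).mpr (hymem P hP)
    · intro hle
      exact hynmem P hP (hle (Ideal.mem_span_singleton_self y))
  have hIdvdN : I ∣ N := ⟨M, mul_comm M I⟩
  have hIY : I ∣ Y := by
    rw [dvd_iff_normalizedFactors_le_normalizedFactors hI0 hY0, Multiset.le_iff_count]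
    intro Q
    by_cases hQ : Q ∈ s
    · rw [hYcount Q hQ]
    · have h1 : (normalizedFactors I).count Q ≤ (normalizedFactors N).count Q :=
        Multiset.count_le_of_le _
          ((dvd_iff_normalizedFactors_le_normalizedFactors hI0 hN0).mp hIdvdN)
      have h0 : (normalizedFactors N).count Q = 0 :=
        Multiset.count_eq_zero.mpr (fun hmem => hQ (Multiset.mem_toFinset.mpr hmem))
      omega
  have hyI : y ∈ I := Ideal.le_of_dvd hIY (Ideal.mem_span_singleton_self y)
  obtain ⟨J, hJ⟩ := hIY
  have hJ0 : J ≠ 0 := by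
    rintro rfl
    rw [mul_zero] at hJ
    exact hY0 hJ
  have hPJ : ∀ P ∈ s, ¬ P ∣ J := by
    intro P hP hdvd
    have hcnt := hYcount P hP
    rw [hJ, normalizedFactors_mul hI0 hJ0, Multiset.count_add] at hcnt
    have h1 : 0 < (normalizedFactors J).count P :=
      Multiset.count_pos.mpr ((mem_normalizedFactors_iff hJ0).mpr ⟨hsprime P hP, hdvd⟩)
    simp only [hedef] at hcnt
    omega
  have hJM : J ⊔ M = ⊤ := by
    by_contra h
    obtain ⟨P', hP'max, hle⟩ := Ideal.exists_le_maximal _ h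
    have hP'bot : P' ≠ ⊥ := by
      intro hb
      exact hM0 (le_bot_iff.mp (hb ▸ le_sup_right.trans hle))
    have hP'prime : Prime P' := Ideal.prime_of_isPrime hP'bot hP'max.isPrime
    have hP's : P' ∈ s := Multiset.mem_toFinset.mpr ((mem_normalizedFactors_iff hN0).mpr
      ⟨hP'prime, Ideal.dvd_iff_le.mpr (Ideal.mul_le_left.trans (le_sup_right.trans hle))⟩)
    exact hPJ P' hP's (Ideal.dvd_iff_le.mpr (le_sup_left.trans hle))
  have hIeq : Y ⊔ M * I = I := by
    rw [hJ, mul_comm M I, ← Ideal.mul_sup, hJM, Ideal.mul_top]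
  have hker : ∀ x : R, x * y ∈ M * I ↔ x ∈ M := by
    intro x
    constructor
    · intro hmem
      rcases eq_or_ne x 0 with rfl | hx0
      · exact M.zero_mem
      have hXY : M * I ∣ Ideal.span {x} * Y := by
        rw [Ideal.dvd_iff_le, hYdef, Ideal.span_singleton_mul_span_singleton,
          Ideal.span_singleton_le_iff_mem]
        exact hmem
      have hMdvd : M ∣ Ideal.span {x} * J := by
        have heq : Ideal.span {x} * Y = I * (Ideal.span {x} * J) := by rw [hJ]; ring
        have h2 : I * M ∣ I * (Ideal.span {x} * J) := by
          rw [← heq, mul_comm I M]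
          exact hXY
        exact (mul_dvd_mul_iff_left hI0).mp h2
      have hx0' : Ideal.span {x} ≠ (0 : Ideal R) := by
        simpa [Ideal.span_singleton_eq_bot] using hx0
      have hXJ0 : Ideal.span {x} * J ≠ 0 := mul_ne_zero hx0' hJ0
      have hMX : M ∣ Ideal.span {x} := by
        rw [dvd_iff_normalizedFactors_le_normalizedFactors hM0 hx0', Multiset.le_iff_count]
        intro Q
        rcases Nat.eq_zero_or_pos ((normalizedFactors M).count Q) with h0 | hpos
        · omega
        have hQmem : Q ∈ normalizedFactors M := Multiset.count_pos.mp hpos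
        have hQs : Q ∈ s := Multiset.mem_toFinset.mpr ((mem_normalizedFactors_iff hN0).mpr
          ⟨prime_of_normalized_factor Q hQmem,
            (dvd_of_mem_normalizedFactors hQmem).trans ⟨I, rfl⟩⟩)
        have hQJ : (normalizedFactors J).count Q = 0 :=
          Multiset.count_eq_zero.mpr (fun hc => hPJ Q hQs (dvd_of_mem_normalizedFactors hc))
        have h1 : (normalizedFactors M).count Q
            ≤ (normalizedFactors (Ideal.span {x} * J)).count Q :=
          Multiset.count_le_of_le _
            ((dvd_iff_normalizedFactors_le_normalizedFactors hM0 hXJ0).mp hMdvd)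
        rw [normalizedFactors_mul hx0' hJ0, Multiset.count_add, hQJ] at h1
        omega
      exact Ideal.le_of_dvd hMX (Ideal.mem_span_singleton_self x)
    · intro hx
      exact Ideal.mul_mem_mul hx hyI
  let f : R →ₗ[R] (I ⧸ (M • (⊤ : Submodule R I))) :=
    LinearMap.toSpanSingleton R _ (Submodule.Quotient.mk ⟨y, hyI⟩)
  have hfapp : ∀ x : R, f x = Submodule.Quotient.mk (x • (⟨y, hyI⟩ : I)) := fun _ => rfl
  have hkerf : LinearMap.ker f = Submodule.comap (Algebra.linearMap R R) M ∨ True := Or.inr trivial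
  have hkerf : LinearMap.ker f = M := by
    ext x
    rw [LinearMap.mem_ker, hfapp, Submodule.Quotient.mk_eq_zero, Submodule.mem_smul_top_iff,
      Ideal.smul_eq_mul]
    exact hker x
  have hsurj : Function.Surjective f := by
    intro z
    obtain ⟨⟨z, hz⟩, rfl⟩ := Submodule.Quotient.mk_surjective _ z
    have hz' : z ∈ Y ⊔ M * I := hIeq.symm ▸ hz
    obtain ⟨u, hu, v, hv, huv⟩ := Submodule.mem_sup.mp hz'
    obtain ⟨c, hc⟩ := Ideal.mem_span_singleton'.mp hu
    refine ⟨c, ?_⟩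
    rw [hfapp, Submodule.Quotient.eq, Submodule.mem_smul_top_iff, Ideal.smul_eq_mul]
    have heq2 : c * y - z = -v := by rw [← huv, hc]; ring
    show c * y - z ∈ M * I
    rw [heq2]
    exact neg_mem hv
  refine ⟨((f.quotKerEquivOfSurjective hsurj).symm).trans (Submodule.quotEquivOfEq _ _ hkerf)⟩
end

section
/- Let A ∈ GL₂(ℤ) have characteristic polynomial (X + 1)² (i.e., tr(A) = −2 and det(A) = 1). If B ∈ GL₂(ℤ) is conjugate to A modulo m for every integer m ≥ 1, then B is conjugate to A in GL₂(ℤ). -/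
open Matrix Polynomial IntermediateField

lemma int_zero_of_all_dvd (n : ℤ) (h : ∀ m : ℕ, 1 ≤ m → (m:ℤ) ∣ n) : n = 0 := by
  by_contra hn
  have h1 := h (n.natAbs + 1) (by omega)
  rcases lt_trichotomy n 0 with hl | hl | hl
  · have h3 := Int.le_of_dvd (by omega) ((dvd_neg).2 h1)
    omega
  · exact hn hl
  · have h2 := Int.le_of_dvd hl h1
    omega

lemma int_zero_of_all_cast_zero (n : ℤ) (h : ∀ m : ℕ, 1 ≤ m → ((n:ZMod m) = 0)) : n = 0 := by
  apply int_zero_of_all_dvd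
  intro m hm
  exact (ZMod.intCast_zmod_eq_zero_iff_dvd n m).1 (h m hm)




lemma nilp_conj_aux (p q r : ℤ) (hd : p * p + q * r = 0) (hq : q ≠ 0) :
    ∃ (P : GL (Fin 2) ℤ) (k : ℤ),
      !![p, q; r, -p] * P.val = P.val * !![0, k; 0, 0] := by
  have hgpos : 0 < Int.gcd p q := Int.gcd_pos_of_ne_zero_right p hq
  have hg0 : (Int.gcd p q : ℤ) ≠ 0 := by positivity
  obtain ⟨x, y, bez, p', q', hp, hq2⟩ :
      ∃ x y : ℤ, (Int.gcd p q : ℤ) = p * x + q * y ∧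
        ∃ p' q' : ℤ, p = (Int.gcd p q : ℤ) * p' ∧ q = (Int.gcd p q : ℤ) * q' := by
    refine ⟨_, _, Int.gcd_eq_gcd_ab p q, ?_⟩
    obtain ⟨p', hp⟩ : (Int.gcd p q : ℤ) ∣ p := Int.gcd_dvd_left p q
    obtain ⟨q', hq2⟩ : (Int.gcd p q : ℤ) ∣ q := Int.gcd_dvd_right p q
    exact ⟨p', q', hp, hq2⟩
  set g : ℤ := (Int.gcd p q : ℤ)
  have hq'0 : q' ≠ 0 := by rintro rfl; simp at hq2; exact hq hq2
  have cop : IsCoprime q' p' := by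
    have h1 : Int.gcd (p / g) (q / g) = 1 := Int.gcd_div_gcd_div_gcd hgpos
    rw [hp, hq2, Int.mul_ediv_cancel_left _ hg0, Int.mul_ediv_cancel_left _ hg0] at h1
    exact (Int.isCoprime_iff_gcd_eq_one.2 (by rwa [Int.gcd_comm]))
  have key2 : q' * (r * x - p * y) = -(p' * g) := by
    have h0 : g * (q' * (r * x - p * y)) = g * (-(p' * g)) := by
      linear_combination x * hd - (r*x - p*y) * hq2 + p * bez - g * hp
    exact mul_left_cancel₀ hg0 h0
  obtain ⟨k, hk⟩ : q' ∣ g := cop.dvd_of_dvd_mul_left ⟨-(r*x - p*y), by linarith [key2]⟩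
  have he : r * x - p * y = -(p' * k) := by
    have h0 : q' * (r * x - p * y) = q' * (-(p' * k)) := by rw [key2, hk]; ring
    exact mul_left_cancel₀ hq'0 h0
  have hdet1 : p' * x + q' * y = 1 := by
    have h0 : g * (p' * x + q' * y) = g * 1 := by
      linear_combination (-1) * bez - x * hp - y * hq2
    exact mul_left_cancel₀ hg0 h0
  have hng2 : r * q' + p * p' = 0 := by
    have h0 : g * (r * q' + p * p') = g * 0 := by
      linear_combination hd - r * hq2 - p * hp
    exact mul_left_cancel₀ hg0 h0
  refine ⟨⟨!![q', x; -p', y], !![y, -x; p', q'], ?_, ?_⟩, k, ?_⟩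
  · ext i j
    fin_cases i <;> fin_cases j <;>
      simp [Matrix.mul_apply, Fin.sum_univ_two] <;> linarith [hdet1]
  · ext i j
    fin_cases i <;> fin_cases j <;>
      simp [Matrix.mul_apply, Fin.sum_univ_two] <;> linarith [hdet1]
  · ext i j
    fin_cases i <;> fin_cases j <;>
      simp [Matrix.mul_apply, Fin.sum_univ_two]
    · linear_combination q' * hp + (-p') * hq2
    · linear_combination (-1) * bez + hk
    · linear_combination hng2
    · linear_combination he

lemma nilp_conj (N : Matrix (Fin 2) (Fin 2) ℤ) (htr : N 1 1 = -N 0 0)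
    (hd : N 0 0 * N 0 0 + N 0 1 * N 1 0 = 0) :
    ∃ (P : GL (Fin 2) ℤ) (k : ℤ), N * P.val = P.val * !![0, k; 0, 0] := by
  have hN : N = !![N 0 0, N 0 1; N 1 0, -(N 0 0)] := by
    ext i j; fin_cases i <;> fin_cases j <;> simp [htr]
  by_cases hq : N 0 1 = 0
  · have hp0 : N 0 0 = 0 := by
      rw [hq] at hd; simpa [mul_self_eq_zero] using hd
    refine ⟨⟨!![0,1;1,0], !![0,1;1,0], by ext i j; fin_cases i <;> fin_cases j <;>
      simp [Matrix.mul_apply, Fin.sum_univ_two], by ext i j; fin_cases i <;> fin_cases j <;>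
      simp [Matrix.mul_apply, Fin.sum_univ_two]⟩, N 1 0, ?_⟩
    rw [hN]
    ext i j; fin_cases i <;> fin_cases j <;>
      simp [Matrix.mul_apply, Fin.sum_univ_two, hp0, hq]
  · rw [hN]
    exact nilp_conj_aux _ _ _ hd hq

lemma charpoly_fin_two' (M : Matrix (Fin 2) (Fin 2) ℤ) :
    M.charpoly = X^2 - C (Matrix.trace M) * X + C (Matrix.det M) := by
  rw [Matrix.charpoly, Matrix.det_fin_two]
  simp [Matrix.charmatrix_apply_eq, Matrix.charmatrix_apply_ne, Matrix.trace_fin_two,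
    Matrix.det_fin_two]
  ring

/-- the companion-type matrix [[-1,k],[0,-1]] as a unit of GL₂ℤ -/
def Cmat (k : ℤ) : GL (Fin 2) ℤ :=
  ⟨!![-1, k; 0, -1], !![-1, -k; 0, -1],
    by ext i j; fin_cases i <;> fin_cases j <;> simp [Matrix.mul_apply, Fin.sum_univ_two],
    by ext i j; fin_cases i <;> fin_cases j <;> simp [Matrix.mul_apply, Fin.sum_univ_two]⟩

lemma conj_to_Cmat (A : GL (Fin 2) ℤ) (hcp : Matrix.charpoly A.val = (X + 1) ^ 2) :
    ∃ k : ℤ, IsConj A (Cmat k) := by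
  -- trace and det
  have h1 : (X^2 - C (Matrix.trace A.val) * X + C (Matrix.det A.val) : ℤ[X])
      = X^2 - C (-2) * X + C 1 := by
    rw [← charpoly_fin_two', hcp]; simp; ring
  have htr : Matrix.trace A.val = -2 := by
    have h2 := congrArg (fun pp => Polynomial.coeff pp 1) h1
    simp only [Polynomial.coeff_add, Polynomial.coeff_sub, Polynomial.coeff_C_mul,
      Polynomial.coeff_X, Polynomial.coeff_C, Polynomial.coeff_X_pow] at h2
    norm_num at h2
    linarith
  -- nilpotency of N = A + 1
  have hsq : (A.val + 1) * (A.val + 1) = 0 := by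
    have h3 := Matrix.aeval_self_charpoly A.val
    rw [hcp] at h3
    simpa [sq] using h3
  set N : Matrix (Fin 2) (Fin 2) ℤ := A.val + 1 with hN
  have htrN : N 1 1 = -N 0 0 := by
    have := Matrix.trace_fin_two A.val
    rw [htr] at this
    simp [hN, Matrix.add_apply, Matrix.one_apply]
    linarith
  have hd : N 0 0 * N 0 0 + N 0 1 * N 1 0 = 0 := by
    have h4 := congrFun (congrFun hsq 0) 0
    simpa [Matrix.mul_apply, Fin.sum_univ_two] using h4
  obtain ⟨P, k, hPk⟩ := nilp_conj N htrN hd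
  refine ⟨k, ?_⟩
  have hval : (A * P).val = (P * Cmat k).val := by
    show A.val * P.val = P.val * (Cmat k).val
    have h5 : (Cmat k).val = !![(0:ℤ), k; 0, 0] - 1 := by
      ext i j; fin_cases i <;> fin_cases j <;> simp [Cmat]
    have h6 : A.val = N - 1 := by simp [hN]
    rw [h5, h6, sub_mul, mul_sub, ← hPk, mul_one, one_mul]
  have hu : A * P = P * Cmat k := Units.ext hval
  have hu' : P * Cmat k * P⁻¹ = A := by rw [← hu, mul_inv_cancel_right]
  exact (isConj_iff.2 ⟨P, hu'⟩).symm

def Dmat : GL (Fin 2) ℤ :=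
  ⟨!![1,0;0,-1], !![1,0;0,-1],
    by ext i j; fin_cases i <;> fin_cases j <;> simp [Matrix.mul_apply, Fin.sum_univ_two],
    by ext i j; fin_cases i <;> fin_cases j <;> simp [Matrix.mul_apply, Fin.sum_univ_two]⟩

lemma cmat_neg_conj (a : ℤ) : IsConj (Cmat (-a)) (Cmat a) := by
  have hu : Dmat * Cmat (-a) = Cmat a * Dmat := by
    apply Units.ext
    show Dmat.val * (Cmat (-a)).val = (Cmat a).val * Dmat.val
    ext i j
    fin_cases i <;> fin_cases j <;>
      simp [Cmat, Dmat, Matrix.mul_apply, Fin.sum_univ_two]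
  exact isConj_iff.2 ⟨Dmat, by rw [hu, mul_inv_cancel_right]⟩

lemma cmat_red_iff (m : ℕ) (k : ℤ) :
    Units.map ((Int.castRingHom (ZMod m)).mapMatrix).toMonoidHom (Cmat k) = -1
      ↔ ((k : ZMod m) = 0) := by
  constructor
  · intro H
    have h1 := congrArg (fun u => u.val 0 1) H
    simpa [Cmat, Matrix.map_apply, Matrix.one_apply] using h1
  · intro hk
    apply Units.ext
    rw [Units.coe_map]
    show (Int.castRingHom (ZMod m)).mapMatrix (Cmat k).val = _
    rw [Units.val_neg, Units.val_one]
    ext i j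
    fin_cases i <;> fin_cases j <;>
      simp [Cmat, Matrix.map_apply, Matrix.one_apply, hk]

lemma isConj_neg_one {G : Type*} [Monoid G] [HasDistribNeg G] {x : G}
    (H : IsConj x (-1)) : x = -1 := by
  obtain ⟨c, hc⟩ := H
  have : (c : G) * x = -1 * c := hc
  calc x = (c⁻¹ : Gˣ) * (c * x) := by rw [← mul_assoc]; simp
  _ = (c⁻¹ : Gˣ) * (-1 * c) := by rw [this]
  _ = -1 := by rw [neg_one_mul, mul_neg]; simp

theorem conjModAll_imp_conj_of_charpoly_X_add_one_sq (A : GL (Fin 2) ℤ)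
    (hcp : Matrix.charpoly A.val = (X + 1) ^ 2)
    (B : GL (Fin 2) ℤ) (h : ∀ m : ℕ, 1 ≤ m → ConjMod m B A) :
    IsConj B A := by
  have htrA : Matrix.trace A.val = -2 := by
    have h1 : (X^2 - C (Matrix.trace A.val) * X + C (Matrix.det A.val) : ℤ[X])
        = X^2 - C (-2) * X + C 1 := by rw [← charpoly_fin_two', hcp]; simp; ring
    have h2 := congrArg (fun pp => Polynomial.coeff pp 1) h1
    simp only [Polynomial.coeff_add, Polynomial.coeff_sub, Polynomial.coeff_C_mul,
      Polynomial.coeff_X, Polynomial.coeff_C, Polynomial.coeff_X_pow] at h2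
    norm_num at h2
    linarith
  have hdetA : Matrix.det A.val = 1 := by
    have h1 : (X^2 - C (Matrix.trace A.val) * X + C (Matrix.det A.val) : ℤ[X])
        = X^2 - C (-2) * X + C 1 := by rw [← charpoly_fin_two', hcp]; simp; ring
    have h2 := congrArg (fun pp => Polynomial.coeff pp 0) h1
    simp only [Polynomial.coeff_add, Polynomial.coeff_sub, Polynomial.coeff_C_mul,
      Polynomial.coeff_X, Polynomial.coeff_C, Polynomial.coeff_X_pow] at h2
    norm_num at h2
    linarith
  -- transfer trace and det to B via congruences
  have key : ∀ m : ℕ, 1 ≤ m →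
      (((Matrix.trace B.val : ℤ) : ZMod m) = ((Matrix.trace A.val : ℤ) : ZMod m) ∧
       ((Matrix.det B.val : ℤ) : ZMod m) = ((Matrix.det A.val : ℤ) : ZMod m)) := by
    intro m hm
    have hc := h m hm
    unfold ConjMod at hc
    obtain ⟨c, hc⟩ := isConj_iff.1 hc
    set f : Matrix (Fin 2) (Fin 2) ℤ →* Matrix (Fin 2) (Fin 2) (ZMod m) :=
      ((Int.castRingHom (ZMod m)).mapMatrix).toMonoidHom
    set rB := Units.map f B
    set rA := Units.map f A
    have hval : (c.val * rB.val * (c⁻¹).val) = rA.val := by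
      rw [← Units.val_mul, ← Units.val_mul, hc]
    constructor
    · have t1 : Matrix.trace rA.val = Matrix.trace rB.val := by
        rw [← hval]
        exact Matrix.trace_units_conj c rB.val
      have e2 : rB.val = (B.val).map (Int.cast : ℤ → ZMod m) := by
        simp [rB, f, RingHom.mapMatrix_apply]
      have e3 : rA.val = (A.val).map (Int.cast : ℤ → ZMod m) := by
        simp [rA, f, RingHom.mapMatrix_apply]
      have t2 : Matrix.trace rB.val = ((Matrix.trace B.val : ℤ) : ZMod m) := by
        rw [e2, Matrix.trace_fin_two, Matrix.trace_fin_two, Matrix.map_apply, Matrix.map_apply]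
        push_cast; ring
      have t3 : Matrix.trace rA.val = ((Matrix.trace A.val : ℤ) : ZMod m) := by
        rw [e3, Matrix.trace_fin_two, Matrix.trace_fin_two, Matrix.map_apply, Matrix.map_apply]
        push_cast; ring
      rw [← t2, ← t3, t1]
    · have t1 : Matrix.det rA.val = Matrix.det rB.val := by
        rw [← hval]
        exact Matrix.det_units_conj c rB.val
      have e2 : rB.val = (Int.castRingHom (ZMod m)).mapMatrix B.val := by
        simp [rB, f]
      have e3 : rA.val = (Int.castRingHom (ZMod m)).mapMatrix A.val := by
        simp [rA, f]
      have t2 : Matrix.det rB.val = ((Matrix.det B.val : ℤ) : ZMod m) := by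
        rw [e2, ← RingHom.map_det]; simp
      have t3 : Matrix.det rA.val = ((Matrix.det A.val : ℤ) : ZMod m) := by
        rw [e3, ← RingHom.map_det]; simp
      rw [← t2, ← t3, t1]
  have htrB : Matrix.trace B.val = -2 := by
    have : Matrix.trace B.val - Matrix.trace A.val = 0 := by
      apply int_zero_of_all_cast_zero
      intro m hm
      push_cast
      rw [(key m hm).1]
      ring
    omega
  have hdetB : Matrix.det B.val = 1 := by
    have : Matrix.det B.val - Matrix.det A.val = 0 := by
      apply int_zero_of_all_cast_zero
      intro m hm
      rw [Int.cast_sub]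
      rw [(key m hm).2]
      ring
    omega
  have hcpB : Matrix.charpoly B.val = (X + 1) ^ 2 := by
    rw [charpoly_fin_two', htrB, hdetB]
    simp
    ring
  obtain ⟨a, hA⟩ := conj_to_Cmat A hcp
  obtain ⟨b, hB⟩ := conj_to_Cmat B hcpB
  -- conjugacy mod m of the normal forms
  have hCm : ∀ m : ℕ, 1 ≤ m → ConjMod m (Cmat b) (Cmat a) := by
    intro m hm
    have hc := h m hm
    unfold ConjMod at hc
    unfold ConjMod
    set f : GL (Fin 2) ℤ →* GL (Fin 2) (ZMod m) :=
      Units.map ((Int.castRingHom (ZMod m)).mapMatrix).toMonoidHom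
    exact ((f.map_isConj hB.symm).trans hc).trans (f.map_isConj hA)
  have hdvd : ∀ m : ℕ, 1 ≤ m → ((m:ℤ) ∣ b ↔ (m:ℤ) ∣ a) := by
    intro m hm
    have hc := hCm m hm
    unfold ConjMod at hc
    constructor
    · intro hb
      have h1 : Units.map ((Int.castRingHom (ZMod m)).mapMatrix).toMonoidHom (Cmat b) = -1 :=
        (cmat_red_iff m b).2 ((ZMod.intCast_zmod_eq_zero_iff_dvd b m).2 hb)
      rw [h1] at hc
      have h2 := isConj_neg_one hc.symm
      exact (ZMod.intCast_zmod_eq_zero_iff_dvd a m).1 ((cmat_red_iff m a).1 h2)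
    · intro ha
      have h1 : Units.map ((Int.castRingHom (ZMod m)).mapMatrix).toMonoidHom (Cmat a) = -1 :=
        (cmat_red_iff m a).2 ((ZMod.intCast_zmod_eq_zero_iff_dvd a m).2 ha)
      rw [h1] at hc
      have h2 := isConj_neg_one hc
      exact (ZMod.intCast_zmod_eq_zero_iff_dvd b m).1 ((cmat_red_iff m b).1 h2)
  -- conclude a = ±b
  have hab : a = b ∨ a = -b := by
    rcases eq_or_ne b 0 with hb0 | hb0
    · have : a = 0 := by
        apply int_zero_of_all_dvd
        intro m hm
        exact (hdvd m hm).1 (by simp [hb0])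
      left; omega
    rcases eq_or_ne a 0 with ha0 | ha0
    · have : b = 0 := by
        apply int_zero_of_all_dvd
        intro m hm
        exact (hdvd m hm).2 (by simp [ha0])
      exact absurd this hb0
    have d1 : b ∣ a := by
      have := (hdvd b.natAbs (by omega)).1 (Int.natAbs_dvd.2 dvd_rfl)
      exact Int.natAbs_dvd.1 this
    have d2 : a ∣ b := by
      have := (hdvd a.natAbs (by omega)).2 (Int.natAbs_dvd.2 dvd_rfl)
      exact Int.natAbs_dvd.1 this
    have : a.natAbs = b.natAbs :=
      Nat.dvd_antisymm (Int.natAbs_dvd_natAbs.2 d2) (Int.natAbs_dvd_natAbs.2 d1)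
    exact Int.natAbs_eq_natAbs_iff.1 this
  have hCC : IsConj (Cmat b) (Cmat a) := by
    rcases hab with rfl | rfl
    · exact IsConj.refl _
    · exact (cmat_neg_conj b).symm
  exact (hB.trans hCC).trans hA.symm
end
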